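/- arXiv:2306.01654 — 3 statements merged into one kernel-verified Lean document; each statement's English description precedes it below -/
import Mathlib

section
/- Let n ≥ 1, let κ : ℝⁿ → ℝ be continuously differentiable with κ and ∇κ bounded, and let p_d, p : ℝⁿ → ℝ be continuously differentiable, strictly positive, with p, p_d, ‖∇p‖ and ‖∇p_d‖ Lebesgue integrable. Then for every x ∈ ℝⁿ: ((p_d − p) * ∇κ)(x) = ∫_{ℝⁿ} p_d(y) ∇(ln p_d)(y) κ(x−y) dy − ∫_{ℝⁿ} p(y) ∇(ln p)(y) κ(x−y) dy, where the convolution of the scalar function p_d − p with the vector field ∇κ is taken entrywise. Consequently, the smoothed score-matching condition ∫ p(y)∇(ln p)(y)κ(x−y)dy = ∫ p_d(y)∇(ln p_d)(y)κ(x−y)dy holds at a point x if and only if ((p_d − p) * ∇κ)(x) = 0. -/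
open MeasureTheory

section IPMAux

open Set Filter Metric

variable {n : ℕ}


lemma lineDeriv_aux (g : EuclideanSpace ℝ (Fin n) → ℝ) (hg : ContDiff ℝ 1 g)
    (c v : EuclideanSpace ℝ (Fin n)) (t : ℝ) :
    HasDerivAt (fun t : ℝ => g (c + t • v)) (fderiv ℝ g (c + t • v) v) t := by
  have h1 : HasDerivAt (fun t : ℝ => c + t • v) v t := by
    simpa using ((hasDerivAt_id t).smul_const v).const_add c
  exact ((hg.differentiable one_ne_zero) _).hasFDerivAt.comp_hasDerivAt t h1

theorem ibp_scalar (κ f : EuclideanSpace ℝ (Fin n) → ℝ) (hκ : ContDiff ℝ 1 κ)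
    {Mκ : ℝ} (hκb : ∀ z, |κ z| ≤ Mκ)
    {Mκ' : ℝ} (hκ'b : ∀ z, ‖fderiv ℝ κ z‖ ≤ Mκ')
    (hf : ContDiff ℝ 1 f) (hfi : Integrable f)
    (hfi' : Integrable fun y => ‖fderiv ℝ f y‖)
    (x v : EuclideanSpace ℝ (Fin n)) :
    ∫ y, f y * (fderiv ℝ κ (x - y) v) = ∫ y, (fderiv ℝ f y v) * κ (x - y) := by
  have hκc : Continuous κ := hκ.continuous
  have hκ'c : Continuous (fderiv ℝ κ) := hκ.continuous_fderiv one_ne_zero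
  have hfc : Continuous f := hf.continuous
  have hf'c : Continuous (fderiv ℝ f) := hf.continuous_fderiv one_ne_zero
  have hDfc : Continuous fun y => fderiv ℝ f y v :=
    (ContinuousLinearMap.apply ℝ ℝ v).continuous.comp hf'c
  have hfi'_trans : ∀ c : EuclideanSpace ℝ (Fin n),
      Integrable (fun y => ‖fderiv ℝ f (y + c)‖) :=
    fun c => ((measurePreserving_add_right (volume : Measure (EuclideanSpace ℝ (Fin n))) c).integrable_comp
      hfi'.aestronglyMeasurable).mpr hfi'
  have hfi_trans : ∀ c : EuclideanSpace ℝ (Fin n), Integrable (fun y => f (y + c)) :=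
    fun c => ((measurePreserving_add_right (volume : Measure (EuclideanSpace ℝ (Fin n))) c).integrable_comp
      hfi.aestronglyMeasurable).mpr hfi
  have hint1 : ∀ t : ℝ, Integrable (fun y => f y * κ (x - y + t • v)) := by
    intro t
    refine (hfi.norm.mul_const Mκ).mono'
      ((hfc.mul (hκc.comp ((continuous_const.sub continuous_id).add continuous_const))).aestronglyMeasurable) ?_
    filter_upwards with y
    rw [norm_mul, Real.norm_eq_abs (κ _)]
    exact mul_le_mul_of_nonneg_left (hκb _) (norm_nonneg _)
  set φ : ℝ → ℝ := fun t => ∫ y, f y * κ (x - y + t • v) with hφdef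
  set ψ : ℝ → ℝ := fun s => ∫ y, (fderiv ℝ f y v) * κ (x - y + s • v) with hψdef
  -- (1) derivative of φ at 0
  have hφ0 : HasDerivAt φ (∫ y, f y * fderiv ℝ κ (x - y + (0:ℝ) • v) v) 0 := by
    refine (hasDerivAt_integral_of_dominated_loc_of_deriv_le (Metric.ball_mem_nhds 0 one_pos)
      (F := fun t y => f y * κ (x - y + t • v))
      (F' := fun t y => f y * fderiv ℝ κ (x - y + t • v) v)
      (bound := fun y => ‖f y‖ * (Mκ' * ‖v‖)) ?_ (hint1 0) ?_ ?_ ?_ ?_).2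
    · exact Eventually.of_forall fun t =>
        ((hfc.mul (hκc.comp ((continuous_const.sub continuous_id).add continuous_const))).aestronglyMeasurable)
    · exact (hfc.mul ((ContinuousLinearMap.apply ℝ ℝ v).continuous.comp
        (hκ'c.comp ((continuous_const.sub continuous_id).add continuous_const)))).aestronglyMeasurable
    · filter_upwards with y t ht
      rw [norm_mul]
      refine mul_le_mul_of_nonneg_left ?_ (norm_nonneg _)
      calc ‖fderiv ℝ κ (x - y + t • v) v‖ ≤ ‖fderiv ℝ κ (x - y + t • v)‖ * ‖v‖ :=
            (fderiv ℝ κ _).le_opNorm v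
        _ ≤ Mκ' * ‖v‖ := mul_le_mul_of_nonneg_right (hκ'b _) (norm_nonneg _)
    · exact (hfi.norm.mul_const _)
    · filter_upwards with y t ht
      exact (lineDeriv_aux κ hκ (x - y) v t).const_mul (f y)
  -- (2) ψ is continuous
  have hψcont : Continuous ψ := by
    refine continuous_of_dominated
      (F := fun s y => (fderiv ℝ f y v) * κ (x - y + s • v))
      (bound := fun y => ‖fderiv ℝ f y‖ * (‖v‖ * Mκ))
      (fun s => ((hDfc.mul (hκc.comp ((continuous_const.sub continuous_id).add
        continuous_const))).aestronglyMeasurable)) ?_ (hfi'.mul_const _) ?_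
    · intro s
      filter_upwards with y
      rw [norm_mul, Real.norm_eq_abs (κ _), ← mul_assoc]
      exact mul_le_mul ((fderiv ℝ f y).le_opNorm v) (hκb _) (abs_nonneg _)
        (mul_nonneg (norm_nonneg _) (norm_nonneg _))
    · filter_upwards with y
      exact continuous_const.mul (hκc.comp ((continuous_const.add
        (continuous_id.smul continuous_const))))
  -- representation of φ by translation
  have φrepr : ∀ r : ℝ, φ r = ∫ y, f (y + r • v) * κ (x - y) := by
    intro r
    have h := integral_add_right_eq_self (μ := (volume : Measure (EuclideanSpace ℝ (Fin n))))
      (fun y => f y * κ (x - y + r • v)) (r • v)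
    rw [hφdef]
    simp only []
    rw [← h]
    congr 1
    funext y
    have : x - (y + r • v) + r • v = x - y := by abel
    rw [this]
  -- swap lemma over Ioc
  have hswap : ∀ a b : ℝ,
      (∫ y, ∫ s in Ioc a b, (fderiv ℝ f (y + s • v) v) * κ (x - y)) =
        ∫ s in Ioc a b, ∫ y, (fderiv ℝ f (y + s • v) v) * κ (x - y) := by
    intro a b
    apply integral_integral_swap
    -- integrability on the product
    have hGc : Continuous (Function.uncurry fun (y : EuclideanSpace ℝ (Fin n)) (s : ℝ) =>
        (fderiv ℝ f (y + s • v) v) * κ (x - y)) := by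
      apply Continuous.mul
      · exact (ContinuousLinearMap.apply ℝ ℝ v).continuous.comp
          (hf'c.comp (continuous_fst.add (continuous_snd.smul continuous_const)))
      · exact hκc.comp (continuous_const.sub continuous_fst)
    have hNc : Continuous (fun p : EuclideanSpace ℝ (Fin n) × ℝ => ‖fderiv ℝ f (p.1 + p.2 • v)‖) :=
      (hf'c.comp (continuous_fst.add (continuous_snd.smul continuous_const))).norm
    have hmaj : Integrable (fun p : EuclideanSpace ℝ (Fin n) × ℝ => ‖fderiv ℝ f (p.1 + p.2 • v)‖)
        ((volume : Measure (EuclideanSpace ℝ (Fin n))).prod (volume.restrict (Ioc a b))) := by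
      rw [integrable_prod_iff' hNc.aestronglyMeasurable]
      constructor
      · exact Eventually.of_forall fun s => hfi'_trans (s • v)
      · have hC : ∀ s : ℝ, (∫ y, ‖‖fderiv ℝ f (y + s • v)‖‖) = ∫ y, ‖fderiv ℝ f y‖ := by
          intro s
          simp_rw [norm_norm]
          exact integral_add_right_eq_self (μ := (volume : Measure (EuclideanSpace ℝ (Fin n))))
            (fun y => ‖fderiv ℝ f y‖) (s • v)
        have hfin : IsFiniteMeasure ((volume : Measure ℝ).restrict (Ioc a b)) := by
          constructor
          rw [Measure.restrict_apply_univ, Real.volume_Ioc]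
          exact ENNReal.ofReal_lt_top
        exact (integrable_const (∫ y, ‖fderiv ℝ f y‖)).congr
          (Eventually.of_forall fun s => (hC s).symm)
    refine ((hmaj.mul_const (‖v‖ * Mκ)).mono' hGc.aestronglyMeasurable ?_)
    filter_upwards with p
    rw [Function.uncurry, norm_mul, Real.norm_eq_abs (κ _), ← mul_assoc]
    exact mul_le_mul ((fderiv ℝ f _).le_opNorm v) (hκb _) (abs_nonneg _)
      (mul_nonneg (norm_nonneg _) (norm_nonneg _))
  -- inner integral equals ψ
  have hinner : ∀ s : ℝ,
      (∫ y, (fderiv ℝ f (y + s • v) v) * κ (x - y)) = ψ s := by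
    intro s
    have h := integral_add_right_eq_self (μ := (volume : Measure (EuclideanSpace ℝ (Fin n))))
      (fun z => (fderiv ℝ f z v) * κ (x - z + s • v)) (s • v)
    rw [hψdef]
    simp only []
    rw [← h]
    congr 1
    funext y
    have : x - (y + s • v) + s • v = x - y := by abel
    rw [this]
  -- (3) key identity
  have key : ∀ t : ℝ, φ t - φ 0 = ∫ s in (0:ℝ)..t, ψ s := by
    intro t
    have hft : Integrable (fun y => f (y + t • v) * κ (x - y)) := by
      refine ((hfi_trans (t • v)).norm.mul_const Mκ).mono'
        (((hfc.comp (continuous_id.add continuous_const)).mul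
          (hκc.comp (continuous_const.sub continuous_id))).aestronglyMeasurable) ?_
      filter_upwards with y
      rw [norm_mul, Real.norm_eq_abs (κ _)]
      exact mul_le_mul_of_nonneg_left (hκb _) (norm_nonneg _)
    have hf0 : Integrable (fun y => f y * κ (x - y)) := by
      have := hint1 0
      simpa using this
    have step1 : φ t - φ 0 = ∫ y, (f (y + t • v) - f y) * κ (x - y) := by
      rw [φrepr t, φrepr 0]
      simp only [zero_smul, add_zero]
      rw [← integral_sub hft hf0]
      congr 1
      funext y
      ring
    have step2 : ∀ y : EuclideanSpace ℝ (Fin n),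
        f (y + t • v) - f y = ∫ s in (0:ℝ)..t, fderiv ℝ f (y + s • v) v := by
      intro y
      have := intervalIntegral.integral_eq_sub_of_hasDerivAt
        (f := fun s : ℝ => f (y + s • v)) (f' := fun s => fderiv ℝ f (y + s • v) v)
        (fun s _ => lineDeriv_aux f hf y v s)
        (((ContinuousLinearMap.apply ℝ ℝ v).continuous.comp
          (hf'c.comp (continuous_const.add (continuous_id.smul continuous_const)))).intervalIntegrable 0 t)
      rw [this]
      simp
    have step3 : φ t - φ 0 =
        ∫ y, ∫ s in (0:ℝ)..t, (fderiv ℝ f (y + s • v) v) * κ (x - y) := by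
      rw [step1]
      congr 1
      funext y
      rw [step2 y, ← intervalIntegral.integral_mul_const]
    rcases le_total 0 t with h0t | ht0
    · rw [step3]
      simp_rw [intervalIntegral.integral_of_le h0t]
      rw [hswap 0 t]
      exact setIntegral_congr_fun measurableSet_Ioc fun s _ => hinner s
    · rw [step3]
      have h1 : ∀ y : EuclideanSpace ℝ (Fin n),
          (∫ s in (0:ℝ)..t, (fderiv ℝ f (y + s • v) v) * κ (x - y)) =
            -∫ s in Ioc t 0, (fderiv ℝ f (y + s • v) v) * κ (x - y) := by
        intro y
        rw [← intervalIntegral.integral_of_le ht0, ← intervalIntegral.integral_symm]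
      simp_rw [h1]
      rw [integral_neg, hswap t 0]
      have h2 : (∫ s in (0:ℝ)..t, ψ s) = -∫ s in Ioc t 0, ψ s := by
        rw [← intervalIntegral.integral_of_le ht0, ← intervalIntegral.integral_symm]
      rw [h2]
      congr 1
      exact setIntegral_congr_fun measurableSet_Ioc fun s _ => hinner s
  -- (4) FTC derivative
  have hψder : HasDerivAt (fun t : ℝ => φ 0 + ∫ s in (0:ℝ)..t, ψ s) (ψ 0) 0 := by
    refine HasDerivAt.const_add _ ?_
    exact intervalIntegral.integral_hasDerivAt_right
      (hψcont.intervalIntegrable 0 0)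
      (hψcont.aestronglyMeasurable.stronglyMeasurableAtFilter)
      hψcont.continuousAt
  have hφeq : φ = fun t : ℝ => φ 0 + ∫ s in (0:ℝ)..t, ψ s := by
    funext t
    have := key t
    linarith
  have hφ0' : HasDerivAt φ (ψ 0) 0 := hφeq ▸ hψder
  have huniq := hφ0.unique hφ0'
  have e1 : (∫ y, f y * fderiv ℝ κ (x - y + (0:ℝ) • v) v) = ∫ y, f y * fderiv ℝ κ (x - y) v := by
    simp
  have e2 : ψ 0 = ∫ y, (fderiv ℝ f y v) * κ (x - y) := by
    rw [hψdef]; simp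
  rw [← e1, huniq, e2]


lemma inner_grad_aux (f : EuclideanSpace ℝ (Fin n) → ℝ) (y v : EuclideanSpace ℝ (Fin n)) :
    inner ℝ (gradient f y) v = fderiv ℝ f y v :=
  InnerProductSpace.toDual_symm_apply

lemma norm_grad_aux (f : EuclideanSpace ℝ (Fin n) → ℝ) (y : EuclideanSpace ℝ (Fin n)) :
    ‖gradient f y‖ = ‖fderiv ℝ f y‖ :=
  LinearIsometryEquiv.norm_map _ _


lemma int_smul_gradκ (κ f : EuclideanSpace ℝ (Fin n) → ℝ) (hκ : ContDiff ℝ 1 κ)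
    {Mκ' : ℝ} (hκ'b : ∀ z, ‖gradient κ z‖ ≤ Mκ')
    (hfc : Continuous f) (hfi : Integrable f) (x : EuclideanSpace ℝ (Fin n)) :
    Integrable (fun y => f y • gradient κ (x - y)) := by
  have hgradc : Continuous (fun z => gradient κ z) :=
    (LinearIsometryEquiv.continuous _).comp (hκ.continuous_fderiv one_ne_zero)
  refine (hfi.norm.mul_const Mκ').mono'
    ((hfc.smul (hgradc.comp (continuous_const.sub continuous_id))).aestronglyMeasurable) ?_
  filter_upwards with y
  rw [norm_smul]
  exact mul_le_mul_of_nonneg_left (hκ'b _) (norm_nonneg _)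

lemma int_smul_gradf (κ f : EuclideanSpace ℝ (Fin n) → ℝ) (hκc : Continuous κ)
    {Mκ : ℝ} (hκb : ∀ z, |κ z| ≤ Mκ) (hf : ContDiff ℝ 1 f)
    (hfi' : Integrable fun y => ‖gradient f y‖) (x : EuclideanSpace ℝ (Fin n)) :
    Integrable (fun y => κ (x - y) • gradient f y) := by
  have hgradc : Continuous (fun z => gradient f z) :=
    (LinearIsometryEquiv.continuous _).comp (hf.continuous_fderiv one_ne_zero)
  refine (hfi'.const_mul Mκ).mono'
    (((hκc.comp (continuous_const.sub continuous_id)).smul hgradc).aestronglyMeasurable) ?_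
  filter_upwards with y
  rw [norm_smul, Real.norm_eq_abs (κ _)]
  exact mul_le_mul_of_nonneg_right (hκb _) (norm_nonneg _)

theorem ibp_vec (κ f : EuclideanSpace ℝ (Fin n) → ℝ) (hκ : ContDiff ℝ 1 κ)
    {Mκ : ℝ} (hκb : ∀ z, |κ z| ≤ Mκ)
    {Mκ' : ℝ} (hκ'b : ∀ z, ‖gradient κ z‖ ≤ Mκ')
    (hf : ContDiff ℝ 1 f) (hfi : Integrable f)
    (hfi' : Integrable fun y => ‖gradient f y‖)
    (x : EuclideanSpace ℝ (Fin n)) :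
    ∫ y, f y • gradient κ (x - y) = ∫ y, κ (x - y) • gradient f y := by
  have hκ'b' : ∀ z, ‖fderiv ℝ κ z‖ ≤ Mκ' := fun z => (norm_grad_aux κ z) ▸ hκ'b z
  have hfi'' : Integrable fun y => ‖fderiv ℝ f y‖ := by
    refine hfi'.congr (Eventually.of_forall fun y => ?_)
    exact norm_grad_aux f y
  have I1 := int_smul_gradκ κ f hκ hκ'b hf.continuous hfi x
  have I2 := int_smul_gradf κ f hκ.continuous hκb hf hfi' x
  apply ext_inner_right ℝ
  intro v
  have h1 : (inner ℝ (∫ y, f y • gradient κ (x - y)) v : ℝ) =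
      ∫ y, f y * fderiv ℝ κ (x - y) v := by
    rw [real_inner_comm, ← integral_inner I1 v]
    congr 1
    funext y
    rw [inner_smul_right, real_inner_comm, inner_grad_aux]
  have h2 : (inner ℝ (∫ y, κ (x - y) • gradient f y) v : ℝ) =
      ∫ y, (fderiv ℝ f y v) * κ (x - y) := by
    rw [real_inner_comm, ← integral_inner I2 v]
    congr 1
    funext y
    rw [inner_smul_right, real_inner_comm, inner_grad_aux, mul_comm]
  rw [h1, h2, ibp_scalar κ f hκ hκb hκ'b' hf hfi hfi'' x v]


lemma grad_log_aux (f : EuclideanSpace ℝ (Fin n) → ℝ) (hf : ContDiff ℝ 1 f)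
    (y : EuclideanSpace ℝ (Fin n)) (hy : 0 < f y) :
    gradient (fun w => Real.log (f w)) y = (f y)⁻¹ • gradient f y := by
  have hfd : HasFDerivAt f (fderiv ℝ f y) y := (hf.differentiable one_ne_zero y).hasFDerivAt
  have hl : HasDerivAt Real.log (f y)⁻¹ (f y) := Real.hasDerivAt_log (ne_of_gt hy)
  have hc : HasFDerivAt (fun w => Real.log (f w)) ((f y)⁻¹ • fderiv ℝ f y) y :=
    hl.comp_hasFDerivAt y hfd
  rw [hc.hasGradientAt.gradient, _root_.map_smul]
  rfl

end IPMAux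

open Set Filter Metric in
/-- **Kernel-gradient form of the smoothed score-matching condition.**
The entrywise convolution of `p_d − p` with `∇κ` equals the difference of the
kernel-smoothed scores, and hence the smoothed score-matching condition holds at a
point `x` if and only if `((p_d − p) * ∇κ)(x) = 0`. -/
theorem ipm_kernel_gradient_identity
    (n : ℕ) (hn : 1 ≤ n)
    (κ : EuclideanSpace ℝ (Fin n) → ℝ) (hκ : ContDiff ℝ 1 κ)
    (hκ_bdd : ∃ M : ℝ, ∀ x, |κ x| ≤ M)
    (hκ_grad_bdd : ∃ M : ℝ, ∀ x, ‖gradient κ x‖ ≤ M)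
    (pd p : EuclideanSpace ℝ (Fin n) → ℝ)
    (hpd_smooth : ContDiff ℝ 1 pd) (hp_smooth : ContDiff ℝ 1 p)
    (hpd_pos : ∀ x, 0 < pd x) (hp_pos : ∀ x, 0 < p x)
    (hp_int : Integrable p) (hpd_int : Integrable pd)
    (hp_grad_int : Integrable fun y => ‖gradient p y‖)
    (hpd_grad_int : Integrable fun y => ‖gradient pd y‖) :
    ∀ x : EuclideanSpace ℝ (Fin n),
      (∫ y, (pd y - p y) • gradient κ (x - y)) =
        (∫ y, (pd y * κ (x - y)) • gradient (fun w => Real.log (pd w)) y) -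
          (∫ y, (p y * κ (x - y)) • gradient (fun w => Real.log (p w)) y) ∧
      ((∫ y, (p y * κ (x - y)) • gradient (fun w => Real.log (p w)) y) =
          (∫ y, (pd y * κ (x - y)) • gradient (fun w => Real.log (pd w)) y) ↔
        (∫ y, (pd y - p y) • gradient κ (x - y)) = 0) := by
  obtain ⟨Mκ, hκb⟩ := hκ_bdd
  obtain ⟨Mκ', hκ'b⟩ := hκ_grad_bdd
  intro x
  -- rewrite the smoothed-score integrands
  have hlog : ∀ (f : EuclideanSpace ℝ (Fin n) → ℝ), ContDiff ℝ 1 f → (∀ z, 0 < f z) →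
      (fun y => (f y * κ (x - y)) • gradient (fun w => Real.log (f w)) y) =
        fun y => κ (x - y) • gradient f y := by
    intro f hf hfpos
    funext y
    rw [grad_log_aux f hf y (hfpos y), smul_smul]
    congr 1
    rw [mul_comm (f y) (κ (x - y)), mul_assoc, mul_inv_cancel₀ (ne_of_gt (hfpos y)), mul_one]
  have Epd := hlog pd hpd_smooth hpd_pos
  have Ep := hlog p hp_smooth hp_pos
  have hsub : (∫ y, (pd y - p y) • gradient κ (x - y)) =
      (∫ y, pd y • gradient κ (x - y)) - ∫ y, p y • gradient κ (x - y) := by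
    simp_rw [sub_smul]
    exact integral_sub (int_smul_gradκ κ pd hκ hκ'b hpd_smooth.continuous hpd_int x)
      (int_smul_gradκ κ p hκ hκ'b hp_smooth.continuous hp_int x)
  have h1 := ibp_vec κ pd hκ hκb hκ'b hpd_smooth hpd_int hpd_grad_int x
  have h2 := ibp_vec κ p hκ hκb hκ'b hp_smooth hp_int hp_grad_int x
  have main : (∫ y, (pd y - p y) • gradient κ (x - y)) =
      (∫ y, (pd y * κ (x - y)) • gradient (fun w => Real.log (pd w)) y) -
        (∫ y, (p y * κ (x - y)) • gradient (fun w => Real.log (p w)) y) := by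
    rw [Epd, Ep, hsub, h1, h2]
  refine ⟨main, ?_⟩
  rw [main, sub_eq_zero]
  exact eq_comm
end

section
/- Let G : ℝⁿ → ℝⁿ be a twice continuously differentiable bijection whose Jacobian matrix J_G(z) satisfies det J_G(z) ≠ 0 for every z ∈ ℝⁿ. Let φ(z) = (2π)^{−n/2} exp(−‖z‖²/2) be the standard Gaussian density, and define the push-forward density p_t : ℝⁿ → ℝ by p_t(x) = φ(G⁻¹(x)) · |det J_G(G⁻¹(x))|⁻¹. Then for every z ∈ ℝⁿ, the function x ↦ ln p_t(x) is differentiable at G(z) and ∇(ln p_t)(G(z)) = −(J_G(z)ᵀ)⁻¹ ( ∇_z ln|det J_G(z)| + z ). -/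
open MeasureTheory Matrix

private lemma diffAt_finset_prod {E : Type*} [NormedAddCommGroup E] [NormedSpace ℝ E]
    {ι : Type*} (s : Finset ι) (f : ι → E → ℝ) {x : E}
    (h : ∀ i ∈ s, DifferentiableAt ℝ (f i) x) :
    DifferentiableAt ℝ (fun w => ∏ i ∈ s, f i w) x := by
  classical
  induction s using Finset.induction_on with
  | empty => simpa using differentiableAt_const (1 : ℝ)
  | insert a s hni ih =>
    simp only [Finset.prod_insert hni]
    exact (h a (Finset.mem_insert_self a s)).mul
      (ih fun i hi => h i (Finset.mem_insert_of_mem hi))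

/-- **Score of the push-forward of a standard Gaussian under an invertible generator.**
If `G` is a `C²` bijection with everywhere nonsingular Jacobian `J_G`, and
`p_t(x) = φ(G⁻¹(x))·|det J_G(G⁻¹(x))|⁻¹` is the change-of-variables density of the
push-forward of the standard Gaussian `φ` under `G`, then
`∇ ln p_t (G(z)) = −(J_G(z)ᵀ)⁻¹ (∇_z ln|det J_G(z)| + z)`. -/
theorem generator_score_gaussian
    (n : ℕ) (hn : 1 ≤ n)
    (G : EuclideanSpace ℝ (Fin n) → EuclideanSpace ℝ (Fin n))
    (hG : ContDiff ℝ 2 G) (hGbij : Function.Bijective G)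
    (J : EuclideanSpace ℝ (Fin n) → Matrix (Fin n) (Fin n) ℝ)
    (hJ : ∀ z j k, J z j k = fderiv ℝ G z (EuclideanSpace.single k (1 : ℝ)) j)
    (hJdet : ∀ z, (J z).det ≠ 0)
    (φ : EuclideanSpace ℝ (Fin n) → ℝ)
    (hφ : ∀ z, φ z = (2 * Real.pi) ^ (-(n : ℝ) / 2) * Real.exp (-‖z‖ ^ 2 / 2))
    (pt : EuclideanSpace ℝ (Fin n) → ℝ)
    (hpt : ∀ x, pt x =
      φ (Function.invFun G x) * |(J (Function.invFun G x)).det|⁻¹) :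
    ∀ z, DifferentiableAt ℝ (fun x => Real.log (pt x)) (G z) ∧
      gradient (fun x => Real.log (pt x)) (G z) =
        -(((J z)ᵀ)⁻¹.mulVec
          (gradient (fun w => Real.log |(J w).det|) z + z)) := by
  classical
  intro z
  have hsum : ∀ (g : Fin n → EuclideanSpace ℝ (Fin n)) (j : Fin n),
      (∑ k, g k) j = ∑ k, g k j := by
    intro g j
    exact map_sum (EuclideanSpace.proj j (𝕜 := ℝ)) g Finset.univ
  -- the derivative of G at z acts as mulVec by J
  have hLv : ∀ (w v : EuclideanSpace ℝ (Fin n)), fderiv ℝ G w v = (J w).mulVec v := by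
    intro w v
    have hv : v = ∑ k, v k • EuclideanSpace.single k (1 : ℝ) := by
      ext j
      rw [hsum]
      simp [EuclideanSpace.single_apply]
    conv_lhs => rw [hv]
    rw [map_sum]
    ext j
    rw [hsum]
    simp only [ContinuousLinearMap.map_smul, PiLp.smul_apply, smul_eq_mul]
    rw [Matrix.mulVec, dotProduct]
    refine Finset.sum_congr rfl fun k _ => ?_
    rw [hJ w j k]
    ring
  have hdetunit : IsUnit (J z).det := isUnit_iff_ne_zero.mpr (hJdet z)
  -- bijectivity of the derivative
  have hbij : Function.Bijective (fderiv ℝ G z) := by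
    have hinj : Function.Injective (fderiv ℝ G z) := by
      intro v w h
      have h2 : (J z).mulVec v = (J z).mulVec w := by rw [← hLv, ← hLv, h]
      have h3 := congrArg (fun u => (J z)⁻¹.mulVec u) h2
      exact WithLp.ofLp_injective 2 (by simpa [Matrix.mulVec_mulVec, Matrix.nonsing_inv_mul _ hdetunit,
        Matrix.one_mulVec] using h3)
    exact ⟨hinj, (LinearMap.injective_iff_surjective
      (f := ((fderiv ℝ G z) : EuclideanSpace ℝ (Fin n) →ₗ[ℝ] EuclideanSpace ℝ (Fin n)))).mp hinj⟩
  let Leq : EuclideanSpace ℝ (Fin n) ≃L[ℝ] EuclideanSpace ℝ (Fin n) :=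
    (LinearEquiv.ofBijective ((fderiv ℝ G z) : EuclideanSpace ℝ (Fin n) →ₗ[ℝ] EuclideanSpace ℝ (Fin n)) hbij).toContinuousLinearEquiv
  have hLeq : (Leq : EuclideanSpace ℝ (Fin n) →L[ℝ] EuclideanSpace ℝ (Fin n)) = fderiv ℝ G z := by
    ext v; rfl
  have hstrict : HasStrictFDerivAt G (Leq : EuclideanSpace ℝ (Fin n) →L[ℝ] EuclideanSpace ℝ (Fin n)) z := by
    rw [hLeq]
    exact (hG.contDiffAt).hasStrictFDerivAt (by norm_num)
  -- the inverse function
  have hinvG : ∀ x, Function.invFun G (G x) = x :=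
    Function.leftInverse_invFun hGbij.1
  have hev : Function.invFun G =ᶠ[nhds (G z)] hstrict.localInverse G Leq z :=
    hstrict.localInverse_unique (Filter.Eventually.of_forall fun x => hinvG x)
  have hHderiv : HasFDerivAt (Function.invFun G) ((Leq.symm : EuclideanSpace ℝ (Fin n) →L[ℝ] EuclideanSpace ℝ (Fin n))) (G z) :=
    (hstrict.to_localInverse.hasFDerivAt).congr_of_eventuallyEq hev
  -- differentiability of log |det J|
  have hfd : ContDiff ℝ 1 (fun w : EuclideanSpace ℝ (Fin n) => fderiv ℝ G w) :=
    hG.fderiv_right (by norm_num)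
  have hJentry : ∀ (j k : Fin n), DifferentiableAt ℝ (fun w => J w j k) z := by
    intro j k
    have heq : (fun w => J w j k) = fun w =>
        (EuclideanSpace.proj j : EuclideanSpace ℝ (Fin n) →L[ℝ] ℝ)
          ((ContinuousLinearMap.apply ℝ (EuclideanSpace ℝ (Fin n)) (EuclideanSpace.single k (1 : ℝ)))
            (fderiv ℝ G w)) := by
      funext w
      simp [hJ w j k, ContinuousLinearMap.apply]
    rw [heq]
    exact (ContinuousLinearMap.differentiableAt _).comp z
      ((ContinuousLinearMap.differentiableAt _).comp z
        ((hfd.differentiable (by norm_num)).differentiableAt))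
  have hdetdiff : DifferentiableAt ℝ (fun w => (J w).det) z := by
    simp_rw [Matrix.det_apply]
    apply DifferentiableAt.fun_sum
    intro σ _
    simp only [Units.smul_def, zsmul_eq_mul]
    exact ((diffAt_finset_prod Finset.univ (fun i w => J w (σ i) i)
      (fun i _ => hJentry (σ i) i)).const_mul _)
  have hF2 : DifferentiableAt ℝ (fun w => Real.log |(J w).det|) z := by
    have heq : (fun w => Real.log |(J w).det|) = fun w => Real.log ((J w).det) := by
      funext w; rw [Real.log_abs]
    rw [heq]
    exact (Real.differentiableAt_log (hJdet z)).comp z hdetdiff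
  -- positivity
  have hcpos : (0:ℝ) < (2 * Real.pi) ^ (-(n : ℝ) / 2) := by positivity
  have hφpos : ∀ w, 0 < φ w := fun w => by
    rw [hφ]; positivity
  have hlogpt : (fun x => Real.log (pt x)) =
      (fun w => Real.log (φ w) - Real.log |(J w).det|) ∘ (Function.invFun G) := by
    funext x
    simp only [Function.comp_apply, hpt x]
    rw [Real.log_mul (ne_of_gt (hφpos _))
      (inv_ne_zero (abs_ne_zero.mpr (hJdet _))), Real.log_inv]
    ring
  set c := Real.log ((2 * Real.pi) ^ (-(n : ℝ) / 2)) with hcdef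
  set D1 := fderiv ℝ (fun w => Real.log |(J w).det|) z with hD1def
  have hD1 : HasFDerivAt (fun w => Real.log |(J w).det|) D1 z := hF2.hasFDerivAt
  -- derivative of log ∘ φ
  have h1 := ((((hasFDerivAt_id (𝕜 := ℝ) z).inner ℝ
      (hasFDerivAt_id (𝕜 := ℝ) z)).neg).const_mul (2⁻¹:ℝ)).const_add c
  have hF1 : HasFDerivAt (fun w => Real.log (φ w)) (-(innerSL ℝ z)) z := by
    refine (h1.congr_of_eventuallyEq (Filter.Eventually.of_forall fun w => ?_)).congr_fderiv ?_
    · rw [hφ, Real.log_mul (ne_of_gt hcpos) (Real.exp_ne_zero _), Real.log_exp]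
      simp only [id_eq, real_inner_self_eq_norm_sq, Pi.neg_apply]
      ring
    · ext v
      simp [fderivInnerCLM_apply, real_inner_comm z v]
      ring
  have htot : HasFDerivAt (fun w => Real.log (φ w) - Real.log |(J w).det|)
      (-(innerSL ℝ z) - D1) z := hF1.sub hD1
  have htot' : HasFDerivAt (fun w => Real.log (φ w) - Real.log |(J w).det|)
      (-(innerSL ℝ z) - D1) (Function.invFun G (G z)) := by
    rw [hinvG z]; exact htot
  have hmain : HasFDerivAt (fun x => Real.log (pt x))
      ((-(innerSL ℝ z) - D1).comp
        ((Leq.symm : EuclideanSpace ℝ (Fin n) →L[ℝ] EuclideanSpace ℝ (Fin n)))) (G z) := by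
    rw [hlogpt]
    exact HasFDerivAt.comp (G z) htot' hHderiv
  refine ⟨hmain.differentiableAt, ?_⟩
  -- inverse of Leq acts as mulVec by (J z)⁻¹
  have hs : ∀ v : EuclideanSpace ℝ (Fin n), Leq.symm v = WithLp.toLp 2 ((J z)⁻¹.mulVec v) := by
    intro v
    apply Leq.injective
    rw [Leq.apply_symm_apply]
    have hLeqapp : Leq (WithLp.toLp 2 ((J z)⁻¹.mulVec v)) = fderiv ℝ G z (WithLp.toLp 2 ((J z)⁻¹.mulVec v)) := by
      rw [← hLeq]; rfl
    apply WithLp.ofLp_injective 2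
    rw [hLeqapp, hLv, WithLp.ofLp_toLp, Matrix.mulVec_mulVec, Matrix.mul_nonsing_inv _ hdetunit,
      Matrix.one_mulVec]
  set g1 := gradient (fun w => Real.log |(J w).det|) z with hg1def
  -- gradient of log |det J| pairs as D1
  have hg1 : ∀ u : EuclideanSpace ℝ (Fin n), (inner ℝ g1 u : ℝ) = D1 u := by
    intro u
    have : g1 = (InnerProductSpace.toDual ℝ (EuclideanSpace ℝ (Fin n))).symm D1 := rfl
    rw [this, InnerProductSpace.toDual_symm_apply]
  have hinner : ∀ a b : EuclideanSpace ℝ (Fin n),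
      (inner ℝ a b : ℝ) = dotProduct (fun i => a i) (fun i => b i) := by
    intro a b
    simp [PiLp.inner_apply, dotProduct, mul_comm]
  have hgrad : HasGradientAt (fun x => Real.log (pt x))
      (WithLp.toLp 2 (-(((J z)ᵀ)⁻¹.mulVec (g1 + z)))) (G z) := by
    rw [hasGradientAt_iff_hasFDerivAt]
    refine hmain.congr_fderiv ?_
    ext v
    simp only [ContinuousLinearMap.coe_comp', Function.comp_apply,
      ContinuousLinearEquiv.coe_coe, ContinuousLinearMap.sub_apply,
      ContinuousLinearMap.neg_apply, innerSL_apply_apply, hs v,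
      InnerProductSpace.toDual_apply_apply]
    have hrhs : @inner ℝ (EuclideanSpace ℝ (Fin n)) _ (WithLp.toLp 2 (-(((J z)ᵀ)⁻¹.mulVec (g1 + z)))) v
        = -(@inner ℝ (EuclideanSpace ℝ (Fin n)) _ (g1 + z) (WithLp.toLp 2 ((J z)⁻¹.mulVec v))) := by
      rw [WithLp.toLp_neg, inner_neg_left, hinner, hinner]
      congr 1
      have h2 : ((J z)ᵀ)⁻¹ = ((J z)⁻¹)ᵀ := (Matrix.transpose_nonsing_inv _).symm
      rw [h2]
      rw [show (fun i => (WithLp.toLp 2 (((J z)⁻¹)ᵀ.mulVec (g1 + z))) i)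
          = ((J z)⁻¹)ᵀ.mulVec (fun i => (g1 + z) i) from rfl]
      rw [Matrix.mulVec_transpose, ← Matrix.dotProduct_mulVec]
    rw [hrhs, inner_add_left, hg1]
    ring
  exact congrArg WithLp.ofLp hgrad.gradient
end

section
/- Let g(D) = −e^{−D} and let f^c(T) = −1 − ln(−T) for T < 0 (the reverse Kullback–Leibler f-GAN parametrization; note g(D) < 0 for all D). For every y ∈ ℝ, D̃(y) = y is the unique real number D satisfying (f^c)'(g(D)) = e^y; and for every r > 0, the coefficient 𝒞 = r · g'(D̃(ln r)) · D̃'(ln r) equals 1. Hence for the reverse-KL GAN the optimal-generator condition reduces to exact score matching ∇ ln p_{t-1} = ∇ ln p_d. -/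
/-- **Reverse Kullback–Leibler f-GAN parametrization:** with `g(D) = −e^{−D}` and
`f^c(T) = −1 − ln(−T)`, the optimal discriminator as a function of the log density
ratio is `D̃(y) = y` (uniquely determined by `(f^c)'(g(D)) = e^y`), the coefficient
`𝒞 = r·g'(D̃(ln r))·D̃'(ln r)` equals `1`, and hence the optimal-generator condition
reduces to exact score matching `∇ ln p = ∇ ln p_d`. -/
theorem rkl_fgan_discriminator_and_coefficient :
    (∀ y D : ℝ,
      deriv (fun T : ℝ => -1 - Real.log (-T)) ((fun d : ℝ => -Real.exp (-d)) D) =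
          Real.exp y ↔ D = y) ∧
    (∀ r : ℝ, 0 < r →
      r * deriv (fun d : ℝ => -Real.exp (-d)) ((fun y : ℝ => y) (Real.log r)) *
          deriv (fun y : ℝ => y) (Real.log r) = 1) ∧
    (∀ (n : ℕ) (p pd : EuclideanSpace ℝ (Fin n) → ℝ),
      Differentiable ℝ p → Differentiable ℝ pd →
      (∀ x, 0 < p x) → (∀ x, 0 < pd x) →
      ∀ x : EuclideanSpace ℝ (Fin n),
        (1 : ℝ) • gradient (fun w => Real.log (pd w / p w)) x = 0 →
          gradient (fun w => Real.log (p w)) x =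
            gradient (fun w => Real.log (pd w)) x) := by
  refine ⟨?_, ?_, ?_⟩
  · intro y D
    have hderiv : ∀ T : ℝ, T < 0 →
        deriv (fun T : ℝ => -1 - Real.log (-T)) T = -T⁻¹ := by
      intro T hT
      have h1 : HasDerivAt (fun T : ℝ => -T) (-1) T := (hasDerivAt_id T).neg
      have h2 : HasDerivAt (fun T : ℝ => Real.log (-T)) ((-T)⁻¹ * (-1)) T :=
        (Real.hasDerivAt_log (by linarith)).comp T h1
      have h3 : HasDerivAt (fun T : ℝ => -1 - Real.log (-T)) (0 - (-T)⁻¹ * (-1)) T :=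
        (hasDerivAt_const T (-1 : ℝ)).sub h2
      have := h3.deriv
      rw [this]
      field_simp
      ring
    have hT : (fun d : ℝ => -Real.exp (-d)) D < 0 := by
      simp [Real.exp_pos]
    rw [hderiv _ hT]
    rw [show -(-Real.exp (-D))⁻¹ = Real.exp D by
      rw [inv_neg, neg_neg, ← Real.exp_neg, neg_neg]]
    constructor
    · intro h; exact Real.exp_injective h
    · intro h; rw [h]
  · intro r hr
    have h1 : ∀ d : ℝ, HasDerivAt (fun d : ℝ => -Real.exp (-d)) (Real.exp (-d)) d := by
      intro d
      have : HasDerivAt (fun d : ℝ => Real.exp (-d)) (Real.exp (-d) * (-1)) d :=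
        (Real.hasDerivAt_exp (-d)).comp d ((hasDerivAt_id d).neg)
      have h2 := this.neg
      simp only [mul_neg, mul_one, neg_neg] at h2
      exact h2
    rw [(h1 (Real.log r)).deriv, deriv_id'']
    rw [Real.exp_neg, Real.exp_log hr]
    field_simp
  · intro n p pd hp hpd hp0 hpd0 x h
    have hlp : DifferentiableAt ℝ (fun w => Real.log (p w)) x :=
      ((hp x).log (ne_of_gt (hp0 x)))
    have hlpd : DifferentiableAt ℝ (fun w => Real.log (pd w)) x :=
      ((hpd x).log (ne_of_gt (hpd0 x)))
    have hfun : (fun w => Real.log (pd w / p w)) =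
        (fun w => Real.log (pd w) - Real.log (p w)) := by
      funext w
      exact Real.log_div (ne_of_gt (hpd0 w)) (ne_of_gt (hp0 w))
    rw [one_smul, hfun] at h
    have hgrad : gradient (fun w => Real.log (pd w) - Real.log (p w)) x =
        gradient (fun w => Real.log (pd w)) x - gradient (fun w => Real.log (p w)) x := by
      unfold gradient
      rw [fderiv_fun_sub hlpd hlp, map_sub]
    rw [hgrad, sub_eq_zero] at h
    exact h.symm
end
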